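/- Let H and K be finite groups that each have a basis, and let φ : H → Aut(K) be a group homomorphism. Then the semidirect product G = K ⋊_φ H has a basis. -/

import Mathlib

/-- A sequence `b : Fin n → G` of non-identity elements is a *basis* for the group `G`
if every `g ∈ G` is uniquely of the form `b 0 ^ a 0 * ⋯ * b (n-1) ^ a (n-1)`
with `a i ∈ {0, …, orderOf (b i) - 1}`. -/
def IsGroupBasis {G : Type*} [Group G] {n : ℕ} (b : Fin n → G) : Prop :=
  (∀ i, b i ≠ 1) ∧
    Function.Bijective (fun a : ∀ i, Fin (orderOf (b i)) =>
      (List.ofFn fun i => b i ^ ((a i : ℕ))).prod)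

/-- `G` has a basis. -/
def HasGroupBasis (G : Type*) [Group G] : Prop :=
  ∃ (n : ℕ) (b : Fin n → G), IsGroupBasis b

/-- If the finite groups `H` and `K` both have bases and `φ : H →* Aut K`,
then the semidirect product `K ⋊[φ] H` has a basis. -/
theorem semidirectProduct_hasGroupBasis {H K : Type*} [Group H] [Group K]
    [Finite H] [Finite K] (φ : H →* MulAut K)
    (hH : HasGroupBasis H) (hK : HasGroupBasis K) :
    HasGroupBasis (K ⋊[φ] H) := by
  obtain ⟨n, bH, hbH1, hbH2⟩ := hH
  obtain ⟨m, bK, hbK1, hbK2⟩ := hK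
  set b : Fin (m + n) → K ⋊[φ] H :=
    Fin.append (fun i => SemidirectProduct.inl (bK i))
      (fun j => SemidirectProduct.inr (bH j)) with hb
  have hleft : ∀ i, b (Fin.castAdd n i) = SemidirectProduct.inl (bK i) := fun i =>
    Fin.append_left _ _ i
  have hright : ∀ j, b (Fin.natAdd m j) = SemidirectProduct.inr (bH j) := fun j =>
    Fin.append_right _ _ j
  have hoK : ∀ i, orderOf (b (Fin.castAdd n i)) = orderOf (bK i) := fun i => by
    rw [hleft]; exact orderOf_injective _ SemidirectProduct.inl_injective _
  have hoH : ∀ j, orderOf (b (Fin.natAdd m j)) = orderOf (bH j) := fun j => by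
    rw [hright]; exact orderOf_injective _ SemidirectProduct.inr_injective _
  refine ⟨m + n, b, ?_, ?_⟩
  · intro i
    refine Fin.addCases ?_ ?_ i
    · intro i h
      rw [hleft] at h
      exact hbK1 i (SemidirectProduct.inl_injective (by simpa using h))
    · intro j h
      rw [hright] at h
      exact hbH1 j (SemidirectProduct.inr_injective (by simpa using h))
  · -- split the pi type
    let e : (∀ i : Fin (m + n), Fin (orderOf (b i))) ≃
        (∀ i, Fin (orderOf (bK i))) × (∀ j, Fin (orderOf (bH j))) :=
      { toFun := fun a => (fun i => Fin.cast (hoK i) (a (Fin.castAdd n i)),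
          fun j => Fin.cast (hoH j) (a (Fin.natAdd m j)))
        invFun := fun p => fun i => Fin.addCases
          (fun i => Fin.cast (hoK i).symm (p.1 i))
          (fun j => Fin.cast (hoH j).symm (p.2 j)) i
        left_inv := fun a => by
          funext i
          refine Fin.addCases (fun i => ?_) (fun j => ?_) i
          · simp
          · simp
        right_inv := fun p => by
          refine Prod.ext ?_ ?_ <;> funext i <;> simp }
    have key : (fun a : ∀ i, Fin (orderOf (b i)) =>
        (List.ofFn fun i => b i ^ ((a i : ℕ))).prod) =
        (fun p : (∀ i, Fin (orderOf (bK i))) × (∀ j, Fin (orderOf (bH j))) =>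
          SemidirectProduct.inl ((List.ofFn fun i => bK i ^ ((p.1 i : ℕ))).prod) *
          SemidirectProduct.inr ((List.ofFn fun j => bH j ^ ((p.2 j : ℕ))).prod)) ∘ e := by
      funext a
      simp only [Function.comp_apply]
      rw [List.ofFn_add (f := fun i => b i ^ ((a i : ℕ))), List.prod_append]
      congr 1
      · rw [map_list_prod SemidirectProduct.inl, List.map_ofFn]
        exact congrArg (List.prod ∘ List.ofFn)
          (funext fun i => by simp [Function.comp, hleft i, e]; exact congrArg (· ^ ((a (Fin.castAdd n i) : ℕ))) (hleft i))
      · rw [map_list_prod SemidirectProduct.inr, List.map_ofFn]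
        exact congrArg (List.prod ∘ List.ofFn)
          (funext fun j => by simp [Function.comp, hright j, e])
    rw [key]
    refine Function.Bijective.comp ?_ e.bijective
    have hmk : Function.Bijective (fun p : K × H =>
        SemidirectProduct.inl p.1 * SemidirectProduct.inr (φ := φ) p.2) := by
      constructor
      · rintro ⟨k₁, h₁⟩ ⟨k₂, h₂⟩ hq
        simp only [← SemidirectProduct.mk_eq_inl_mul_inr] at hq
        obtain ⟨h1, h2⟩ := SemidirectProduct.ext_iff.mp hq
        exact Prod.ext h1 h2
      · rintro ⟨k, h⟩
        exact ⟨(k, h), (SemidirectProduct.mk_eq_inl_mul_inr h k).symm⟩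
    have : (fun p : (∀ i, Fin (orderOf (bK i))) × (∀ j, Fin (orderOf (bH j))) =>
          SemidirectProduct.inl ((List.ofFn fun i => bK i ^ ((p.1 i : ℕ))).prod) *
          SemidirectProduct.inr (φ := φ) ((List.ofFn fun j => bH j ^ ((p.2 j : ℕ))).prod)) =
        (fun p : K × H => SemidirectProduct.inl p.1 * SemidirectProduct.inr p.2) ∘
          Prod.map (fun a => (List.ofFn fun i => bK i ^ ((a i : ℕ))).prod)
            (fun a => (List.ofFn fun j => bH j ^ ((a j : ℕ))).prod) := rfl
    rw [this]
    exact hmk.comp (hbK2.prodMap hbH2)
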